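/- Let n ≥ 1, fix a type α with index set I_α, exponents β_i and common value c, let p, q be the associated functionals, and let k, λ > 0 and t₀ ∈ ℝ. Suppose x : [0,∞) → ℝⁿ is continuous with p(x(τ)) < 1 for all τ, set h(τ) := 1 − p(x(τ))^{2c}, and assume that for every ε > 0, e^{(λ+ε)τ}·h(τ) → +∞ and e^{(λ−ε)τ}·h(τ) → 0 as τ → ∞. Define t(τ) := t₀ + ∫₀^τ q(x(σ))·h(σ)^k dσ; then t_max := lim_{τ→∞} t(τ) is finite. Let P(τ) := p(x(τ))/h(τ), which equals p(y(τ)) for the point y(τ) with components y_j(τ) = h(τ)^{−α_j}·x_j(τ). Then for every ε > 0, (t_max − t(τ))^{1/k+ε}·P(τ) → 0 and (t_max − t(τ))^{1/k−ε}·P(τ) → +∞ as τ → ∞; that is, the blow-up is of type I: p(y(t)) behaves like (t_max − t)^{−1/k} up to a factor that is sub-polynomial in −ln(t_max − t). -/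

import Mathlib

open Real Set MeasureTheory Filter Topology intervalIntegral

/-- The quasi-parabolic functional `p(x) = (∑_{i ∈ Iα} x_i^{2βᵢ})^{1/(2c)}`. -/
noncomputable def pQH {n : ℕ} (Iα : Finset (Fin n)) (β : Fin n → ℕ) (c : ℕ)
    (x : Fin n → ℝ) : ℝ :=
  (∑ i ∈ Iα, x i ^ (2 * β i)) ^ ((1 : ℝ) / (2 * (c : ℝ)))

/-- The functional `q(x) = 1 - ((2c-1)/(2c)) (1 - p(x)^{2c})`. -/
noncomputable def qQH {n : ℕ} (Iα : Finset (Fin n)) (β : Fin n → ℕ) (c : ℕ)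
    (x : Fin n → ℝ) : ℝ :=
  1 - ((2 * (c : ℝ) - 1) / (2 * (c : ℝ))) * (1 - pQH Iα β c x ^ (2 * (c : ℝ)))

lemma exp_neg_integral_Ioi' {b : ℝ} (hb : 0 < b) (τ : ℝ) :
    ∫ σ in Ioi τ, Real.exp (-b * σ) = Real.exp (-b * τ) / b := by
  have hderiv : ∀ s ∈ Ici τ,
      HasDerivAt (fun σ => -Real.exp (-b * σ) / b) (Real.exp (-b * s)) s := by
    intro s _
    have h1 : HasDerivAt (fun σ : ℝ => -b * σ) (-b) s := by
      simpa using (hasDerivAt_id s).const_mul (-b)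
    have h2 := (h1.exp).neg.div_const b
    have e : -(Real.exp (-b * s) * -b) / b = Real.exp (-b * s) := by
      rw [div_eq_iff hb.ne']; ring
    rw [e] at h2
    exact h2
  have hint : IntegrableOn (fun σ => Real.exp (-b * σ)) (Ioi τ) :=
    exp_neg_integrableOn_Ioi τ hb
  have htend : Tendsto (fun σ => -Real.exp (-b * σ) / b) atTop (𝓝 0) := by
    have h0 : Tendsto (fun σ : ℝ => Real.exp (-b * σ)) atTop (𝓝 0) := by
      have := Real.tendsto_exp_neg_atTop_nhds_zero.comp
        (tendsto_id.const_mul_atTop hb)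
      simpa [Function.comp_def, neg_mul] using this
    simpa using (h0.neg).div_const b
  have := integral_Ioi_of_hasDerivAt_of_tendsto' hderiv hint htend
  rw [this]
  ring

lemma tendsto_atTop_of_exp_lb {g : ℝ → ℝ} {C b : ℝ} (hC : 0 < C) (hb : 0 < b)
    (hg : ∀ᶠ τ in atTop, C * Real.exp (b * τ) ≤ g τ) : Tendsto g atTop atTop := by
  have h1 : Tendsto (fun τ : ℝ => C * Real.exp (b * τ)) atTop atTop :=
    (Real.tendsto_exp_atTop.comp (tendsto_id.const_mul_atTop hb)).const_mul_atTop hC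
  exact tendsto_atTop_mono' _ hg h1

lemma tendsto_zero_of_exp_ub {g : ℝ → ℝ} {C b : ℝ} (hb : b < 0)
    (h0 : ∀ᶠ τ in atTop, 0 ≤ g τ)
    (hg : ∀ᶠ τ in atTop, g τ ≤ C * Real.exp (b * τ)) : Tendsto g atTop (𝓝 0) := by
  have h1 : Tendsto (fun τ : ℝ => C * Real.exp (b * τ)) atTop (𝓝 0) := by
    have h2 : Tendsto (fun τ : ℝ => Real.exp (-(-b) * τ)) atTop (𝓝 0) := by
      have := Real.tendsto_exp_neg_atTop_nhds_zero.comp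
        (tendsto_id.const_mul_atTop (by linarith : (0:ℝ) < -b))
      simpa [Function.comp_def, neg_mul] using this
    have h3 : Tendsto (fun τ : ℝ => Real.exp (b * τ)) atTop (𝓝 0) := by
      simpa [neg_neg] using h2
    simpa using h3.const_mul C
  exact tendsto_of_tendsto_of_tendsto_of_le_of_le' tendsto_const_nhds h1 h0 hg

set_option maxHeartbeats 1000000 in
theorem typeI_blowup_rate
    {n : ℕ} (hn : 1 ≤ n)
    (α : Fin n → ℕ) (hα : ∃ i, α i ≠ 0)
    (Iα : Finset (Fin n)) (hIα : ∀ i, i ∈ Iα ↔ 0 < α i)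
    (c : ℕ) (hc : 0 < c)
    (β : Fin n → ℕ) (hβpos : ∀ i ∈ Iα, 0 < β i)
    (hβ : ∀ i ∈ Iα, α i * β i = c)
    (k lam t₀ : ℝ) (hk : 0 < k) (hlam : 0 < lam)
    (x : ℝ → Fin n → ℝ) (hx : ContinuousOn x (Ici 0))
    (hxin : ∀ τ ∈ Ici (0 : ℝ), pQH Iα β c (x τ) < 1) :
    let h : ℝ → ℝ := fun τ => 1 - pQH Iα β c (x τ) ^ (2 * (c : ℝ))
    let t : ℝ → ℝ := fun τ => t₀ + ∫ σ in (0 : ℝ)..τ, qQH Iα β c (x σ) * h σ ^ k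
    let P : ℝ → ℝ := fun τ => pQH Iα β c (x τ) / h τ
    (∀ ε > (0 : ℝ),
      Tendsto (fun τ => Real.exp ((lam + ε) * τ) * h τ) atTop atTop) →
    (∀ ε > (0 : ℝ),
      Tendsto (fun τ => Real.exp ((lam - ε) * τ) * h τ) atTop (𝓝 0)) →
    ∃ tmax : ℝ,
      Tendsto t atTop (𝓝 tmax) ∧
      ∀ ε > (0 : ℝ),
        Tendsto (fun τ => (tmax - t τ) ^ (1 / k + ε) * P τ) atTop (𝓝 0) ∧
        Tendsto (fun τ => (tmax - t τ) ^ (1 / k - ε) * P τ) atTop atTop := by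
  intro h t P hup hdown
  classical
  set p : ℝ → ℝ := fun τ => pQH Iα β c (x τ) with hp_def
  set f : ℝ → ℝ := fun σ => qQH Iα β c (x σ) * h σ ^ k with hf_def
  set m : ℝ := (2 * (c : ℝ))⁻¹ with hm_def
  have hc1 : (1:ℝ) ≤ (c:ℝ) := by exact_mod_cast hc
  have hc2 : (0:ℝ) < 2 * (c:ℝ) := by linarith
  have hm : 0 < m := by rw [hm_def]; positivity
  have hm1 : m ≤ 1 := by
    rw [hm_def]
    rw [inv_le_one_iff₀]
    right; linarith
  -- basic `rfl` facts about the let-bound functions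
  have hh_eq : ∀ τ, h τ = 1 - p τ ^ (2*(c:ℝ)) := fun τ => rfl
  have ht_eq : ∀ τ, t τ = t₀ + ∫ σ in (0:ℝ)..τ, f σ := fun τ => rfl
  have hP_eq : ∀ τ, P τ = p τ / h τ := fun τ => rfl
  -- nonnegativity of p
  have hp0 : ∀ τ, 0 ≤ p τ := by
    intro τ
    apply Real.rpow_nonneg
    exact Finset.sum_nonneg fun i _ => (even_two_mul (β i)).pow_nonneg _
  -- bounds on h
  have hh_pos : ∀ τ ∈ Ici (0:ℝ), 0 < h τ := by
    intro τ hτ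
    have h1 : p τ ^ (2*(c:ℝ)) < 1 := Real.rpow_lt_one (hp0 τ) (hxin τ hτ) (by linarith)
    rw [hh_eq]; linarith
  have hh_le1 : ∀ τ, h τ ≤ 1 := by
    intro τ
    have h1 : 0 ≤ p τ ^ (2*(c:ℝ)) := Real.rpow_nonneg (hp0 τ) _
    rw [hh_eq]; linarith
  -- bounds on q
  have hqh : ∀ τ, qQH Iα β c (x τ) = 1 - ((2*(c:ℝ)-1)/(2*(c:ℝ))) * h τ := fun τ => rfl
  have hK1 : (2*(c:ℝ)-1)/(2*(c:ℝ)) = 1 - m := by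
    rw [hm_def]; field_simp
  have hq_le : ∀ τ ∈ Ici (0:ℝ), qQH Iα β c (x τ) ≤ 1 := by
    intro τ hτ
    rw [hqh, hK1]
    nlinarith [hh_pos τ hτ]
  have hq_ge : ∀ τ ∈ Ici (0:ℝ), m ≤ qQH Iα β c (x τ) := by
    intro τ hτ
    rw [hqh, hK1]
    nlinarith [hh_pos τ hτ, hh_le1 τ]
  -- bounds on f
  have hf_ub : ∀ τ ∈ Ici (0:ℝ), f τ ≤ h τ ^ k := by
    intro τ hτ
    have h1 : 0 ≤ h τ ^ k := Real.rpow_nonneg (hh_pos τ hτ).le k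
    calc f τ ≤ 1 * h τ ^ k := mul_le_mul_of_nonneg_right (hq_le τ hτ) h1
    _ = h τ ^ k := one_mul _
  have hf_lb : ∀ τ ∈ Ici (0:ℝ), m * h τ ^ k ≤ f τ := by
    intro τ hτ
    exact mul_le_mul_of_nonneg_right (hq_ge τ hτ) (Real.rpow_nonneg (hh_pos τ hτ).le k)
  have hf_pos : ∀ τ ∈ Ici (0:ℝ), 0 < f τ := by
    intro τ hτ
    exact mul_pos (lt_of_lt_of_le hm (hq_ge τ hτ)) (Real.rpow_pos_of_pos (hh_pos τ hτ) k)
  -- continuity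
  have hx_i : ∀ i : Fin n, ContinuousOn (fun τ => x τ i) (Ici 0) := fun i =>
    (continuous_apply i).comp_continuousOn hx
  have hpcont : ContinuousOn p (Ici 0) := by
    apply ContinuousOn.rpow_const
    · exact continuousOn_finset_sum _ fun i _ => (hx_i i).pow _
    · intro τ _; right; positivity
  have hhcont : ContinuousOn h (Ici 0) := by
    apply continuousOn_const.sub
    apply hpcont.rpow_const
    intro τ _; right; linarith
  have hqcont : ContinuousOn (fun τ => qQH Iα β c (x τ)) (Ici 0) := by
    have : (fun τ => qQH Iα β c (x τ)) = fun τ => 1 - ((2*(c:ℝ)-1)/(2*(c:ℝ))) * h τ :=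
      funext hqh
    rw [this]
    exact continuousOn_const.sub (continuousOn_const.mul hhcont)
  have hfcont : ContinuousOn f (Ici 0) :=
    hqcont.mul (hhcont.rpow_const fun τ _ => Or.inr hk.le)
  -- eventual exponential bounds on h
  have hub : ∀ δ : ℝ, 0 < δ → ∀ᶠ τ in atTop, h τ ≤ Real.exp (-(lam - δ) * τ) := by
    intro δ hδ
    have h1 := hdown δ hδ
    have h2 : ∀ᶠ τ in atTop, Real.exp ((lam - δ) * τ) * h τ < 1 :=
      h1.eventually_lt_const one_pos
    filter_upwards [h2] with τ hτ
    have key : Real.exp (-(lam-δ)*τ) * Real.exp ((lam-δ)*τ) = 1 := by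
      rw [← Real.exp_add]
      have e1 : -(lam-δ)*τ + (lam-δ)*τ = 0 := by ring
      rw [e1, Real.exp_zero]
    calc h τ = (Real.exp (-(lam-δ)*τ) * Real.exp ((lam-δ)*τ)) * h τ := by rw [key, one_mul]
    _ = Real.exp (-(lam-δ)*τ) * (Real.exp ((lam-δ)*τ) * h τ) := by ring
    _ ≤ Real.exp (-(lam-δ)*τ) * 1 := mul_le_mul_of_nonneg_left hτ.le (Real.exp_pos _).le
    _ = Real.exp (-(lam-δ)*τ) := mul_one _
  have hlb : ∀ δ : ℝ, 0 < δ → ∀ᶠ τ in atTop, Real.exp (-(lam + δ) * τ) ≤ h τ := by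
    intro δ hδ
    have h1 := hup δ hδ
    have h2 : ∀ᶠ τ in atTop, 1 ≤ Real.exp ((lam + δ) * τ) * h τ :=
      h1.eventually_ge_atTop 1
    filter_upwards [h2] with τ hτ
    have key : Real.exp (-(lam+δ)*τ) * Real.exp ((lam+δ)*τ) = 1 := by
      rw [← Real.exp_add]
      have e1 : -(lam+δ)*τ + (lam+δ)*τ = 0 := by ring
      rw [e1, Real.exp_zero]
    calc Real.exp (-(lam+δ)*τ) = Real.exp (-(lam+δ)*τ) * 1 := (mul_one _).symm
    _ ≤ Real.exp (-(lam+δ)*τ) * (Real.exp ((lam+δ)*τ) * h τ) :=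
        mul_le_mul_of_nonneg_left hτ (Real.exp_pos _).le
    _ = (Real.exp (-(lam+δ)*τ) * Real.exp ((lam+δ)*τ)) * h τ := by ring
    _ = h τ := by rw [key, one_mul]
  -- h tends to zero
  have hh0 : Tendsto h atTop (𝓝 0) := by
    apply tendsto_zero_of_exp_ub (C := 1) (b := -(lam - lam/2)) (by linarith)
    · filter_upwards [eventually_ge_atTop (0:ℝ)] with τ hτ
      exact (hh_pos τ hτ).le
    · filter_upwards [hub (lam/2) (by linarith)] with τ hτ
      simpa [neg_mul, one_mul] using hτ
  -- integrability of f on (0,∞)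
  have hfint : IntegrableOn f (Ioi 0) := by
    apply integrable_of_isBigO_exp_neg (b := (lam/2) * k) (by positivity) hfcont
    rw [Asymptotics.isBigO_iff]
    refine ⟨1, ?_⟩
    filter_upwards [hub (lam/2) (by linarith), eventually_ge_atTop (0:ℝ)] with τ h1 h2
    have hfnn : 0 ≤ f τ := (hf_pos τ h2).le
    have hhk : h τ ^ k ≤ Real.exp (-(lam - lam/2) * τ) ^ k :=
      Real.rpow_le_rpow (hh_pos τ h2).le h1 hk.le
    have hexp : Real.exp (-(lam - lam/2) * τ) ^ k = Real.exp (-(lam/2 * k) * τ) := by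
      rw [← Real.exp_mul]
      ring_nf
    rw [Real.norm_eq_abs, Real.norm_eq_abs, abs_of_nonneg hfnn,
      abs_of_nonneg (Real.exp_pos _).le, one_mul]
    calc f τ ≤ h τ ^ k := hf_ub τ h2
    _ ≤ Real.exp (-(lam - lam/2) * τ) ^ k := hhk
    _ = Real.exp (-(lam/2 * k) * τ) := hexp
  set tmax : ℝ := t₀ + ∫ σ in Ioi (0:ℝ), f σ with htmax_def
  have ht_tendsto : Tendsto t atTop (𝓝 tmax) := by
    have h1 := intervalIntegral_tendsto_integral_Ioi 0 hfint tendsto_id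
    have h2 := h1.const_add t₀
    apply h2.congr
    intro τ
    simp only [id_eq, ht_eq]
  -- the remainder
  have hR : ∀ τ, 0 ≤ τ → tmax - t τ = ∫ σ in Ioi τ, f σ := by
    intro τ hτ
    have hint1 : IntegrableOn f (Ioc 0 τ) := hfint.mono_set Ioc_subset_Ioi_self
    have hint2 : IntegrableOn f (Ioi τ) := hfint.mono_set (Ioi_subset_Ioi hτ)
    have hsplit : ∫ σ in Ioi (0:ℝ), f σ = (∫ σ in Ioc 0 τ, f σ) + ∫ σ in Ioi τ, f σ := by
      rw [← setIntegral_union (Ioc_disjoint_Ioi le_rfl) measurableSet_Ioi hint1 hint2,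
        Ioc_union_Ioi_eq_Ioi hτ]
    rw [ht_eq, intervalIntegral.integral_of_le hτ, htmax_def, hsplit]
    ring
  -- upper bound for the remainder
  have hRub : ∀ δ : ℝ, 0 < δ → δ < lam → ∀ᶠ τ in atTop,
      tmax - t τ ≤ (1/((lam-δ)*k)) * Real.exp (-((lam-δ)*k) * τ) := by
    intro δ hδ hδlam
    have hbk : 0 < (lam - δ)*k := mul_pos (by linarith) hk
    obtain ⟨T, hT⟩ := eventually_atTop.1 (hub δ hδ)
    filter_upwards [eventually_ge_atTop (max T 0)] with τ hτ
    have hτT : T ≤ τ := le_trans (le_max_left _ _) hτ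
    have hτ0 : (0:ℝ) ≤ τ := le_trans (le_max_right _ _) hτ
    rw [hR τ hτ0]
    have hint2 : IntegrableOn f (Ioi τ) := hfint.mono_set (Ioi_subset_Ioi hτ0)
    have hint3 : IntegrableOn (fun σ => Real.exp (-((lam-δ)*k) * σ)) (Ioi τ) :=
      exp_neg_integrableOn_Ioi τ hbk
    have hle : ∀ σ ∈ Ioi τ, f σ ≤ Real.exp (-((lam-δ)*k) * σ) := by
      intro σ hσ
      have hσT : T ≤ σ := le_trans hτT (le_of_lt hσ)
      have hσ0 : (0:ℝ) ≤ σ := le_trans hτ0 (le_of_lt hσ)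
      have h1 : h σ ≤ Real.exp (-(lam-δ)*σ) := hT σ hσT
      have hexp : Real.exp (-(lam-δ)*σ) ^ k = Real.exp (-((lam-δ)*k) * σ) := by
        rw [← Real.exp_mul]; ring_nf
      calc f σ ≤ h σ ^ k := hf_ub σ hσ0
      _ ≤ Real.exp (-(lam-δ)*σ) ^ k := Real.rpow_le_rpow (hh_pos σ hσ0).le h1 hk.le
      _ = Real.exp (-((lam-δ)*k) * σ) := hexp
    calc (∫ σ in Ioi τ, f σ) ≤ ∫ σ in Ioi τ, Real.exp (-((lam-δ)*k) * σ) :=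
          setIntegral_mono_on hint2 hint3 measurableSet_Ioi hle
    _ = Real.exp (-((lam-δ)*k) * τ) / ((lam-δ)*k) := exp_neg_integral_Ioi' hbk τ
    _ = (1/((lam-δ)*k)) * Real.exp (-((lam-δ)*k) * τ) := by ring
  -- lower bound for the remainder
  have hRlb : ∀ δ : ℝ, 0 < δ → ∀ᶠ τ in atTop,
      (m/((lam+δ)*k)) * Real.exp (-((lam+δ)*k) * τ) ≤ tmax - t τ := by
    intro δ hδ
    have hbk : 0 < (lam + δ)*k := mul_pos (by linarith) hk
    obtain ⟨T, hT⟩ := eventually_atTop.1 (hlb δ hδ)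
    filter_upwards [eventually_ge_atTop (max T 0)] with τ hτ
    have hτT : T ≤ τ := le_trans (le_max_left _ _) hτ
    have hτ0 : (0:ℝ) ≤ τ := le_trans (le_max_right _ _) hτ
    rw [hR τ hτ0]
    have hint2 : IntegrableOn f (Ioi τ) := hfint.mono_set (Ioi_subset_Ioi hτ0)
    have hint3 : IntegrableOn (fun σ => m * Real.exp (-((lam+δ)*k) * σ)) (Ioi τ) :=
      (exp_neg_integrableOn_Ioi τ hbk).const_mul m
    have hle : ∀ σ ∈ Ioi τ, m * Real.exp (-((lam+δ)*k) * σ) ≤ f σ := by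
      intro σ hσ
      have hσT : T ≤ σ := le_trans hτT (le_of_lt hσ)
      have hσ0 : (0:ℝ) ≤ σ := le_trans hτ0 (le_of_lt hσ)
      have h1 : Real.exp (-(lam+δ)*σ) ≤ h σ := hT σ hσT
      have hexp : Real.exp (-(lam+δ)*σ) ^ k = Real.exp (-((lam+δ)*k) * σ) := by
        rw [← Real.exp_mul]; ring_nf
      have h2 : Real.exp (-((lam+δ)*k) * σ) ≤ h σ ^ k := by
        rw [← hexp]
        exact Real.rpow_le_rpow (Real.exp_pos _).le h1 hk.le
      calc m * Real.exp (-((lam+δ)*k) * σ) ≤ m * h σ ^ k :=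
            mul_le_mul_of_nonneg_left h2 hm.le
      _ ≤ f σ := hf_lb σ hσ0
    calc (m/((lam+δ)*k)) * Real.exp (-((lam+δ)*k) * τ)
        = m * (Real.exp (-((lam+δ)*k) * τ) / ((lam+δ)*k)) := by ring
    _ = m * ∫ σ in Ioi τ, Real.exp (-((lam+δ)*k) * σ) := by rw [exp_neg_integral_Ioi' hbk τ]
    _ = ∫ σ in Ioi τ, m * Real.exp (-((lam+δ)*k) * σ) := by rw [MeasureTheory.integral_const_mul]
    _ ≤ ∫ σ in Ioi τ, f σ := setIntegral_mono_on hint3 hint2 measurableSet_Ioi hle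
  -- eventual positivity of the remainder
  have hRpos : ∀ᶠ τ in atTop, 0 < tmax - t τ := by
    filter_upwards [hRlb 1 one_pos] with τ hτ
    have hbk : 0 < (lam + 1)*k := mul_pos (by linarith) hk
    have : 0 < (m/((lam+1)*k)) * Real.exp (-((lam+1)*k) * τ) :=
      mul_pos (div_pos hm hbk) (Real.exp_pos _)
    exact this.trans_le hτ
  -- p is eventually at least 1/2
  have hp_half : ∀ᶠ τ in atTop, (1/2:ℝ) ≤ p τ := by
    filter_upwards [hh0.eventually_lt_const (by norm_num : (0:ℝ) < 1/4),
      eventually_ge_atTop (0:ℝ)] with τ h1 h2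
    by_contra hcon
    push_neg at hcon
    have h3 : p τ ^ (2*(c:ℝ)) ≤ (1/2:ℝ) ^ (2*(c:ℝ)) :=
      Real.rpow_le_rpow (hp0 τ) hcon.le (by linarith)
    have h4 : (1/2:ℝ) ^ (2*(c:ℝ)) ≤ (1/2:ℝ) ^ (1:ℝ) :=
      Real.rpow_le_rpow_of_exponent_ge (by norm_num) (by norm_num) (by linarith)
    rw [Real.rpow_one] at h4
    have h5 : (1/2:ℝ) ≤ h τ := by rw [hh_eq]; linarith
    linarith
  -- eventual bounds on P
  have hPub : ∀ δ : ℝ, 0 < δ → ∀ᶠ τ in atTop, P τ ≤ Real.exp ((lam+δ)*τ) := by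
    intro δ hδ
    filter_upwards [hlb δ hδ, eventually_ge_atTop (0:ℝ)] with τ h1 h2
    rw [hP_eq]
    have hh := hh_pos τ h2
    have hp1 := hxin τ h2
    have step1 : p τ / h τ ≤ 1 / h τ := by gcongr
    have step2 : 1 / h τ ≤ Real.exp ((lam+δ)*τ) := by
      rw [div_le_iff₀ hh]
      have key : Real.exp ((lam+δ)*τ) * Real.exp (-(lam+δ)*τ) = 1 := by
        rw [← Real.exp_add]
        have e1 : (lam+δ)*τ + -(lam+δ)*τ = 0 := by ring
        rw [e1, Real.exp_zero]
      calc (1:ℝ) = Real.exp ((lam+δ)*τ) * Real.exp (-(lam+δ)*τ) := key.symm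
      _ ≤ Real.exp ((lam+δ)*τ) * h τ := mul_le_mul_of_nonneg_left h1 (Real.exp_pos _).le
    linarith
  have hPlb : ∀ δ : ℝ, 0 < δ → ∀ᶠ τ in atTop, (1/2) * Real.exp ((lam-δ)*τ) ≤ P τ := by
    intro δ hδ
    filter_upwards [hub δ hδ, hp_half, eventually_ge_atTop (0:ℝ)] with τ h1 h2 h3
    rw [hP_eq]
    have hh := hh_pos τ h3
    have key : Real.exp ((lam-δ)*τ) * h τ ≤ 1 := by
      have key2 : Real.exp ((lam-δ)*τ) * Real.exp (-(lam-δ)*τ) = 1 := by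
        rw [← Real.exp_add]
        have e1 : (lam-δ)*τ + -(lam-δ)*τ = 0 := by ring
        rw [e1, Real.exp_zero]
      calc Real.exp ((lam-δ)*τ) * h τ ≤ Real.exp ((lam-δ)*τ) * Real.exp (-(lam-δ)*τ) :=
            mul_le_mul_of_nonneg_left h1 (Real.exp_pos _).le
      _ = 1 := key2
    have e_le : Real.exp ((lam-δ)*τ) ≤ 1 / h τ := by
      rw [le_div_iff₀ hh]; exact key
    have step1 : (1/2) * Real.exp ((lam-δ)*τ) ≤ (1/2) / h τ := by
      calc (1/2) * Real.exp ((lam-δ)*τ) ≤ (1/2) * (1/h τ) :=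
            mul_le_mul_of_nonneg_left e_le (by norm_num)
      _ = (1/2)/h τ := by ring
    have step2 : (1/2) / h τ ≤ p τ / h τ := by gcongr
    linarith
  -- conclusion
  refine ⟨tmax, ht_tendsto, ?_⟩
  intro ε hε
  constructor
  · -- first limit: → 0
    set δ : ℝ := lam * (k*ε) / (2*(2 + k*ε)) with hδ_def
    have hδpos : 0 < δ := by rw [hδ_def]; positivity
    have hδlam : δ < lam := by
      rw [hδ_def, div_lt_iff₀ (by positivity)]
      nlinarith [mul_pos hk hε, mul_pos hlam (mul_pos hk hε)]
    have hδeq : δ * (2 + k*ε) = lam * (k*ε) / 2 := by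
      rw [hδ_def]; field_simp
    set b₁ : ℝ := (lam+δ) - (lam-δ)*k*(1/k+ε) with hb₁_def
    have hkinv : k * (1/k + ε) = 1 + k*ε := by field_simp
    have hb₁neg : b₁ < 0 := by
      have h3 : (lam-δ)*(k*(1/k+ε)) = (lam-δ)*(1+k*ε) := by rw [hkinv]
      rw [hb₁_def]
      nlinarith [h3, hδeq, mul_pos hk hε, mul_pos hδpos (mul_pos hk hε)]
    have hs₁ : (0:ℝ) < 1/k + ε := by positivity
    have hC₁ : (0:ℝ) < 1/((lam-δ)*k) := by
      apply div_pos one_pos (mul_pos (by linarith) hk)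
    apply tendsto_zero_of_exp_ub (C := (1/((lam-δ)*k)) ^ (1/k+ε)) (b := b₁) hb₁neg
    · filter_upwards [hRpos, eventually_ge_atTop (0:ℝ)] with τ h1 h2
      exact mul_nonneg (Real.rpow_nonneg h1.le _)
        (div_nonneg (hp0 τ) (hh_pos τ h2).le)
    · filter_upwards [hRub δ hδpos hδlam, hRpos, hPub δ hδpos,
        eventually_ge_atTop (0:ℝ)] with τ hA hB hC hD
      have hPnn : 0 ≤ P τ := div_nonneg (hp0 τ) (hh_pos τ hD).le
      have e1 : (tmax - t τ) ^ (1/k+ε) ≤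
          ((1/((lam-δ)*k)) * Real.exp (-((lam-δ)*k) * τ)) ^ (1/k+ε) :=
        Real.rpow_le_rpow hB.le hA hs₁.le
      have e2 : ((1/((lam-δ)*k)) * Real.exp (-((lam-δ)*k) * τ)) ^ (1/k+ε)
          = (1/((lam-δ)*k)) ^ (1/k+ε) * Real.exp (-((lam-δ)*k) * τ * (1/k+ε)) := by
        rw [Real.mul_rpow hC₁.le (Real.exp_pos _).le, ← Real.exp_mul]
      have e3 : (tmax - t τ) ^ (1/k+ε) * P τ ≤
          ((1/((lam-δ)*k)) ^ (1/k+ε) * Real.exp (-((lam-δ)*k) * τ * (1/k+ε)))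
            * Real.exp ((lam+δ)*τ) := by
        apply mul_le_mul (by rw [← e2]; exact e1) hC hPnn
        positivity
      calc (tmax - t τ) ^ (1/k+ε) * P τ ≤ _ := e3
      _ = (1/((lam-δ)*k)) ^ (1/k+ε) * Real.exp (b₁ * τ) := by
          rw [mul_assoc, ← Real.exp_add, hb₁_def]
          ring_nf
  · -- second limit: → ∞
    set s₂ : ℝ := 1/k - ε with hs₂_def
    rcases le_or_gt 0 s₂ with hs | hs
    · -- 0 ≤ 1/k - ε
      set δ : ℝ := lam * (k*ε) / (2*(2 + k*ε)) with hδ_def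
      have hδpos : 0 < δ := by rw [hδ_def]; positivity
      have hδlam : δ < lam := by
        rw [hδ_def, div_lt_iff₀ (by positivity)]
        nlinarith [mul_pos hk hε, mul_pos hlam (mul_pos hk hε)]
      have hδeq : δ * (2 + k*ε) = lam * (k*ε) / 2 := by
        rw [hδ_def]; field_simp
      set b₂ : ℝ := (lam-δ) - (lam+δ)*k*s₂ with hb₂_def
      have hkinv : k * s₂ = 1 - k*ε := by rw [hs₂_def]; field_simp
      have hb₂pos : 0 < b₂ := by
        have h3 : (lam+δ)*(k*s₂) = (lam+δ)*(1-k*ε) := by rw [hkinv]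
        rw [hb₂_def]
        nlinarith [h3, hδeq, mul_pos hk hε, mul_pos hδpos (mul_pos hk hε)]
      have hbk : 0 < (lam + δ)*k := mul_pos (by linarith) hk
      have hC₂ : (0:ℝ) < m/((lam+δ)*k) := div_pos hm hbk
      apply tendsto_atTop_of_exp_lb
        (C := (m/((lam+δ)*k)) ^ s₂ * (1/2)) (b := b₂)
        (mul_pos (Real.rpow_pos_of_pos hC₂ _) (by norm_num)) hb₂pos
      filter_upwards [hRlb δ hδpos, hPlb δ hδpos, eventually_ge_atTop (0:ℝ)]
        with τ hA hB hD
      have e1 : ((m/((lam+δ)*k)) * Real.exp (-((lam+δ)*k) * τ)) ^ s₂ ≤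
          (tmax - t τ) ^ s₂ :=
        Real.rpow_le_rpow (by positivity) hA hs
      have e2 : ((m/((lam+δ)*k)) * Real.exp (-((lam+δ)*k) * τ)) ^ s₂
          = (m/((lam+δ)*k)) ^ s₂ * Real.exp (-((lam+δ)*k) * τ * s₂) := by
        rw [Real.mul_rpow hC₂.le (Real.exp_pos _).le, ← Real.exp_mul]
      have e3 : ((m/((lam+δ)*k)) ^ s₂ * Real.exp (-((lam+δ)*k) * τ * s₂))
            * ((1/2) * Real.exp ((lam-δ)*τ)) ≤ (tmax - t τ) ^ s₂ * P τ := by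
        apply mul_le_mul (by rw [← e2]; exact e1) hB (by positivity)
        exact Real.rpow_nonneg (le_trans (by positivity) hA) _
      calc (m/((lam+δ)*k)) ^ s₂ * (1/2) * Real.exp (b₂ * τ)
          = ((m/((lam+δ)*k)) ^ s₂ * Real.exp (-((lam+δ)*k) * τ * s₂))
            * ((1/2) * Real.exp ((lam-δ)*τ)) := by
            rw [hb₂_def]
            rw [mul_mul_mul_comm, ← Real.exp_add]
            ring_nf
      _ ≤ (tmax - t τ) ^ s₂ * P τ := e3
    · -- 1/k - ε < 0
      set δ : ℝ := lam/2 with hδ_def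
      have hδpos : 0 < δ := by rw [hδ_def]; linarith
      have hδlam : δ < lam := by rw [hδ_def]; linarith
      set b₃ : ℝ := (lam-δ) - (lam-δ)*k*s₂ with hb₃_def
      have hkinv : k * s₂ = 1 - k*ε := by rw [hs₂_def]; field_simp
      have hb₃pos : 0 < b₃ := by
        have h3 : (lam-δ)*(k*s₂) = (lam-δ)*(1-k*ε) := by rw [hkinv]
        rw [hb₃_def]
        nlinarith [h3, mul_pos hk hε]
      have hbk : 0 < (lam - δ)*k := mul_pos (by linarith) hk
      have hC₁ : (0:ℝ) < 1/((lam-δ)*k) := div_pos one_pos hbk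
      apply tendsto_atTop_of_exp_lb
        (C := (1/((lam-δ)*k)) ^ s₂ * (1/2)) (b := b₃)
        (mul_pos (Real.rpow_pos_of_pos hC₁ _) (by norm_num)) hb₃pos
      filter_upwards [hRub δ hδpos hδlam, hRpos, hPlb δ hδpos,
        eventually_ge_atTop (0:ℝ)] with τ hA hB hC hD
      have e1 : ((1/((lam-δ)*k)) * Real.exp (-((lam-δ)*k) * τ)) ^ s₂ ≤
          (tmax - t τ) ^ s₂ :=
        Real.rpow_le_rpow_of_nonpos hB hA hs.le
      have e2 : ((1/((lam-δ)*k)) * Real.exp (-((lam-δ)*k) * τ)) ^ s₂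
          = (1/((lam-δ)*k)) ^ s₂ * Real.exp (-((lam-δ)*k) * τ * s₂) := by
        rw [Real.mul_rpow hC₁.le (Real.exp_pos _).le, ← Real.exp_mul]
      have e3 : ((1/((lam-δ)*k)) ^ s₂ * Real.exp (-((lam-δ)*k) * τ * s₂))
            * ((1/2) * Real.exp ((lam-δ)*τ)) ≤ (tmax - t τ) ^ s₂ * P τ := by
        apply mul_le_mul (by rw [← e2]; exact e1) hC (by positivity)
        exact Real.rpow_nonneg hB.le _
      calc (1/((lam-δ)*k)) ^ s₂ * (1/2) * Real.exp (b₃ * τ)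
          = ((1/((lam-δ)*k)) ^ s₂ * Real.exp (-((lam-δ)*k) * τ * s₂))
            * ((1/2) * Real.exp ((lam-δ)*τ)) := by
            rw [hb₃_def]
            rw [mul_mul_mul_comm, ← Real.exp_add]
            ring_nf
      _ ≤ (tmax - t τ) ^ s₂ * P τ := e3
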